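/- For every graph G, the edge-clique covering number of G equals the vertex-clique cover number of the edge-clique graph of G: θ_e(G) = κ(K_e(G)). -/

import Mathlib

open SimpleGraph

lemma adj_of_mem_mem {V : Type*} {G : SimpleGraph V} {e : Sym2 V} (he : e ∈ G.edgeSet)
    {u v : V} (hu : u ∈ e) (hv : v ∈ e) (hne : u ≠ v) : G.Adj u v := by
  induction e with
  | _ a b =>
    rw [Sym2.mem_iff] at hu hv
    rw [SimpleGraph.mem_edgeSet] at he
    rcases hu with rfl | rfl <;> rcases hv with rfl | rfl <;>
      first | exact he | exact he.symm | exact absurd rfl hne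

/-- The edge-clique graph `K_e(G)`: vertices are the edges of `G`, two edges
being adjacent iff their endpoints together span a clique of `G`. -/
def Ke {V : Type*} (G : SimpleGraph V) : SimpleGraph G.edgeSet where
  Adj e f := e ≠ f ∧ G.IsClique {x | x ∈ e.1 ∨ x ∈ f.1}
  symm := ⟨by
    rintro e f ⟨hne, hc⟩
    refine ⟨hne.symm, ?_⟩
    have h : {x | x ∈ f.1 ∨ x ∈ e.1} = {x | x ∈ e.1 ∨ x ∈ f.1} := by
      ext x; exact or_comm
    rw [h]; exact hc⟩
  loopless := ⟨fun e h => h.1 rfl⟩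

/-- A family of cliques covering every edge of `G`. -/
def IsEdgeCliqueCover {V : Type*} (G : SimpleGraph V) (F : Finset (Finset V)) : Prop :=
  (∀ C ∈ F, G.IsClique (C : Set V)) ∧
    ∀ e ∈ G.edgeSet, ∃ C ∈ F, ∀ x ∈ e, x ∈ C

/-- The edge-clique covering number `θ_e(G)`. -/
noncomputable def thetaE {V : Type*} (G : SimpleGraph V) : ℕ :=
  sInf {n | ∃ F : Finset (Finset V), IsEdgeCliqueCover G F ∧ F.card = n}

/-- The vertex-clique cover number `κ(H)`: the minimum number of cliques of `H`
whose union is the whole vertex set. -/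
noncomputable def cliqueCoverNum {W : Type*} (H : SimpleGraph W) : ℕ :=
  sInf {n | ∃ F : Finset (Set W), (∀ C ∈ F, H.IsClique C) ∧
    (∀ w : W, ∃ C ∈ F, w ∈ C) ∧ F.card = n}

/-- `θ_e(G) = κ(K_e(G))`. -/
theorem thetaE_eq_cliqueCoverNum_Ke {V : Type*} [Fintype V] (G : SimpleGraph V) :
    thetaE G = cliqueCoverNum (Ke G) := by
  classical
  set A := {n | ∃ F : Finset (Finset V), IsEdgeCliqueCover G F ∧ F.card = n} with hA
  set B := {n | ∃ F : Finset (Set G.edgeSet), (∀ C ∈ F, (Ke G).IsClique C) ∧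
    (∀ w : G.edgeSet, ∃ C ∈ F, w ∈ C) ∧ F.card = n} with hB
  -- A is nonempty
  have hAne : A.Nonempty := by
    set F0 : Finset (Finset V) := Finset.univ.filter (fun C => G.IsClique (↑C : Set V)) with hF0
    have h1 : ∀ C ∈ F0, G.IsClique (C : Set V) := by
      intro C hC
      exact (Finset.mem_filter.mp hC).2
    have h2 : ∀ e ∈ G.edgeSet, ∃ C ∈ F0, ∀ x ∈ e, x ∈ C := by
      intro e he
      induction e with
      | _ a b =>
        rw [SimpleGraph.mem_edgeSet] at he
        refine ⟨{a, b}, ?_, ?_⟩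
        · rw [hF0, Finset.mem_filter]
          refine ⟨Finset.mem_univ _, ?_⟩
          have : ((({a, b} : Finset V) : Set V)) = ({a, b} : Set V) := by simp
          rw [this]
          exact SimpleGraph.isClique_pair.mpr (fun _ => he)
        · intro x hx
          rw [Sym2.mem_iff] at hx
          rcases hx with rfl | rfl <;> simp
    exact ⟨F0.card, F0, ⟨h1, h2⟩, rfl⟩
  -- direction 1: from an edge-clique cover to a vertex cover of Ke
  have dir1 : ∀ n ∈ A, ∃ m ∈ B, m ≤ n := by
    rintro n ⟨F, ⟨hcl, hcov⟩, rfl⟩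
    refine ⟨(F.image (fun C => {e : G.edgeSet | ∀ x ∈ e.1, x ∈ C})).card,
      ⟨_, ?_, ?_, rfl⟩, Finset.card_image_le⟩
    · intro S hS
      obtain ⟨C, hC, rfl⟩ := Finset.mem_image.mp hS
      intro e he f hf hne
      refine ⟨hne, (hcl C hC).subset ?_⟩
      rintro x (hx | hx)
      · exact he x hx
      · exact hf x hx
    · intro w
      obtain ⟨C, hC, hsub⟩ := hcov w.1 w.2
      exact ⟨_, Finset.mem_image_of_mem _ hC, hsub⟩
  -- direction 2
  have dir2 : ∀ n ∈ B, ∃ m ∈ A, m ≤ n := by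
    rintro n ⟨F, hcl, hcov, rfl⟩
    refine ⟨(F.image (fun C => Finset.univ.filter
      (fun v => ∃ e ∈ C, v ∈ (e : G.edgeSet).1))).card,
      ⟨_, ⟨?_, ?_⟩, rfl⟩, Finset.card_image_le⟩
    · intro T hT
      obtain ⟨C, hC, rfl⟩ := Finset.mem_image.mp hT
      intro u hu v hv hne
      simp only [Finset.coe_filter, Finset.mem_univ, true_and, Set.mem_setOf_eq] at hu hv
      obtain ⟨e, heC, hue⟩ := hu
      obtain ⟨f, hfC, hvf⟩ := hv
      by_cases hef : e = f
      · subst hef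
        exact adj_of_mem_mem e.2 hue hvf hne
      · obtain ⟨-, hcli⟩ := hcl C hC heC hfC hef
        exact hcli (Or.inl hue) (Or.inr hvf) hne
    · intro e he
      obtain ⟨C, hC, hw⟩ := hcov ⟨e, he⟩
      refine ⟨_, Finset.mem_image_of_mem _ hC, ?_⟩
      intro x hx
      simp only [Finset.mem_filter, Finset.mem_univ, true_and]
      exact ⟨⟨e, he⟩, hw, hx⟩
  -- conclude
  have hBne : B.Nonempty := by
    obtain ⟨n, hn⟩ := hAne
    obtain ⟨m, hm, -⟩ := dir1 n hn
    exact ⟨m, hm⟩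
  have h1 : sInf B ≤ sInf A := by
    obtain ⟨m, hm, hle⟩ := dir1 _ (Nat.sInf_mem hAne)
    exact le_trans (Nat.sInf_le hm) hle
  have h2 : sInf A ≤ sInf B := by
    obtain ⟨m, hm, hle⟩ := dir2 _ (Nat.sInf_mem hBne)
    exact le_trans (Nat.sInf_le hm) hle
  exact le_antisymm h2 h1
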